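/- Let K be a proper cone in a finite-dimensional real Hilbert space V and let L be a linear transformation on V. Then the following are equivalent: (1) L has the 𝒵-property relative to K and L(K) ⊆ K; (2) L + tI is an automorphism of K (i.e., L + tI is invertible and (L + tI)(K) = K) for all t > 0. -/

import Mathlib

open scoped RealInnerProductSpace

/-- A proper cone in a finite-dimensional real Hilbert space: a topologically closed,
pointed convex cone with nonempty interior. -/
def IsProperCone {V : Type*} [NormedAddCommGroup V] [InnerProductSpace ℝ V]
    (K : Set V) : Prop :=
  IsClosed K ∧ (∀ x ∈ K, ∀ y ∈ K, x + y ∈ K) ∧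
    (∀ (c : ℝ), 0 ≤ c → ∀ x ∈ K, c • x ∈ K) ∧
    (∀ x ∈ K, -x ∈ K → x = 0) ∧ (interior K).Nonempty

/-- `L` has the `𝒵`-property relative to `K`: for `x ∈ K`, `y ∈ K*` with `⟪x, y⟫ = 0`
one has `⟪L x, y⟫ ≤ 0`. -/
def HasZProperty {V : Type*} [NormedAddCommGroup V] [InnerProductSpace ℝ V]
    (K : Set V) (L : V →ₗ[ℝ] V) : Prop :=
  ∀ x ∈ K, ∀ y : V, (∀ z ∈ K, 0 ≤ ⟪y, z⟫) → ⟪x, y⟫ = 0 → ⟪L x, y⟫ ≤ 0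

set_option linter.unusedSectionVars false

section ZauxLemmas

variable {V : Type*} [NormedAddCommGroup V] [InnerProductSpace ℝ V] [FiniteDimensional ℝ V]

private lemma zaux_smul_mul (a b : ℝ) (X Y : V →L[ℝ] V) :
    (a • X) * (b • Y) = (a * b) • (X * Y) := by
  ext v
  simp only [ContinuousLinearMap.mul_apply, ContinuousLinearMap.smul_apply, map_smul]
  rw [smul_smul, mul_comm]

private lemma zaux_moreau {K : Set V} (hcl : IsClosed K)
    (hadd : ∀ x ∈ K, ∀ y ∈ K, x + y ∈ K)
    (hsmul : ∀ (c : ℝ), 0 ≤ c → ∀ x ∈ K, c • x ∈ K)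
    (h0 : (0 : V) ∈ K) (x : V) :
    ∃ p u : V, p ∈ K ∧ (∀ w ∈ K, 0 ≤ ⟪u, w⟫) ∧ ⟪p, u⟫ = 0 ∧ x = p - u := by
  have hconv : Convex ℝ K := by
    intro a ha b hb s t hs ht hst
    exact hadd _ (hsmul s hs a ha) _ (hsmul t ht b hb)
  obtain ⟨p, hpK, hpmin⟩ :=
    exists_norm_eq_iInf_of_complete_convex ⟨0, h0⟩ hcl.isComplete hconv x
  have hchar := (norm_eq_iInf_iff_real_inner_le_zero hconv hpK).1 hpmin
  refine ⟨p, p - x, hpK, ?_, ?_, by abel⟩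
  · intro w hw
    have := hchar (w + p) (hadd w hw p hpK)
    rw [add_sub_cancel_right] at this
    have : ⟪p - x, w⟫ = -⟪x - p, w⟫ := by
      rw [← inner_neg_left, neg_sub]
    rw [this]
    linarith [hchar (w + p) (hadd w hw p hpK), (by rw [add_sub_cancel_right] :
      ⟪x - p, w + p - p⟫ = ⟪x - p, w⟫)]
  · have h1 := hchar 0 h0
    have h2 := hchar ((2 : ℝ) • p) (hsmul 2 (by norm_num) p hpK)
    have e1 : ⟪x - p, (0 : V) - p⟫ = -⟪x - p, p⟫ := by
      rw [zero_sub, inner_neg_right]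
    have e2 : ((2 : ℝ) • p) - p = p := by
      rw [two_smul]; abel
    rw [e1] at h1
    rw [e2] at h2
    have h3 : ⟪x - p, p⟫ = 0 := le_antisymm h2 (by linarith)
    have : ⟪p, p - x⟫ = -⟪x - p, p⟫ := by
      rw [real_inner_comm, ← inner_neg_left, neg_sub]
    rw [this, h3, neg_zero]

private lemma zaux_strict_functional {K : Set V} (hcl : IsClosed K)
    (hadd : ∀ x ∈ K, ∀ y ∈ K, x + y ∈ K)
    (hsmul : ∀ (c : ℝ), 0 ≤ c → ∀ x ∈ K, c • x ∈ K)
    (hpt : ∀ x ∈ K, -x ∈ K → x = 0)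
    (hne : ∃ x ∈ K, x ≠ 0) :
    ∃ y₀ : V, ∃ c : ℝ, 0 < c ∧ ∀ w ∈ K, c * ‖w‖ ≤ ⟪w, y₀⟫ := by
  classical
  -- K as a convex cone
  let Kc : ConvexCone ℝ V :=
    { carrier := K
      smul_mem' := fun c hc x hx => hsmul c hc.le x hx
      add_mem' := fun x hx y hy => hadd x hx y hy }
  have hKcne : (Kc : Set V).Nonempty := ⟨0, by
    obtain ⟨x, hx, -⟩ := hne
    show (0 : V) ∈ K
    simpa using hsmul 0 le_rfl x hx⟩
  -- separation: any nonzero element of K admits a positive functional strictly positive on it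
  have sep : ∀ w ∈ K, w ≠ 0 → ∃ y : V, (∀ x ∈ K, 0 ≤ ⟪x, y⟫) ∧ 0 < ⟪w, y⟫ := by
    intro w hw hw0
    have hnot : -w ∉ Kc := by
      intro hmem
      exact hw0 (hpt w hw hmem)
    obtain ⟨y, hy1, hy2⟩ :=
      ProperCone.hyperplane_separation' (x₀ := -w)
        ({ carrier := K
           add_mem' := fun hx hy => hadd _ hx _ hy
           zero_mem' := hKcne.elim fun a ha => by simpa using hsmul 0 le_rfl a ha
           smul_mem' := fun c x hx => hsmul c c.2 x hx
           isClosed' := hcl } : ProperCone ℝ V) hnot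
    replace hy2 : ⟪y, -w⟫ < 0 := by rwa [real_inner_comm]
    refine ⟨y, fun x hx => hy1 x hx, ?_⟩
    have : ⟪y, -w⟫ = -⟪w, y⟫ := by rw [inner_neg_right, real_inner_comm]
    rw [this] at hy2
    linarith
  -- compact "base"
  have hScomp : IsCompact (K ∩ Metric.sphere (0 : V) 1) :=
    (isCompact_sphere (0 : V) 1).inter_left hcl
  -- open cover indexed by positive functionals
  let ι := {y : V // ∀ x ∈ K, 0 ≤ ⟪x, y⟫}
  let U : ι → Set V := fun i => {w : V | 0 < ⟪w, (i : V)⟫}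
  have hUopen : ∀ i, IsOpen (U i) := fun i =>
    isOpen_lt continuous_const (continuous_id.inner continuous_const)
  have hcover : K ∩ Metric.sphere (0 : V) 1 ⊆ ⋃ i, U i := by
    rintro w ⟨hwK, hwS⟩
    have hw0 : w ≠ 0 := by
      intro h
      rw [h] at hwS
      simp at hwS
    obtain ⟨y, hy1, hy2⟩ := sep w hwK hw0
    exact Set.mem_iUnion.2 ⟨⟨y, hy1⟩, hy2⟩
  obtain ⟨T, hT⟩ := hScomp.elim_finite_subcover U hUopen hcover
  set y₀ : V := ∑ i ∈ T, (i : V) with hy₀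
  have hy₀K : ∀ x ∈ K, 0 ≤ ⟪x, y₀⟫ := by
    intro x hx
    rw [hy₀, inner_sum]
    exact Finset.sum_nonneg fun i _ => i.2 x hx
  have hy₀pos : ∀ w ∈ K ∩ Metric.sphere (0 : V) 1, 0 < ⟪w, y₀⟫ := by
    intro w hw
    obtain ⟨i, hiT, hiU⟩ := Set.mem_iUnion₂.1 (hT hw)
    rw [hy₀, inner_sum]
    exact Finset.sum_pos' (fun j _ => j.2 w hw.1) ⟨i, hiT, hiU⟩
  -- minimum over the compact base
  have hSne : (K ∩ Metric.sphere (0 : V) 1).Nonempty := by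
    obtain ⟨x, hx, hx0⟩ := hne
    refine ⟨‖x‖⁻¹ • x, hsmul _ (by positivity) x hx, ?_⟩
    simp [norm_smul, abs_of_nonneg, inv_mul_cancel₀ (norm_ne_zero_iff.2 hx0)]
  obtain ⟨w₀, hw₀, hmin⟩ := hScomp.exists_isMinOn (f := fun w : V => ⟪w, y₀⟫) hSne
    ((continuous_id.inner continuous_const).continuousOn)
  refine ⟨y₀, ⟪w₀, y₀⟫, hy₀pos w₀ hw₀, ?_⟩
  intro w hw
  rcases eq_or_ne w 0 with rfl | hw0
  · simp
  · have hu : ‖w‖⁻¹ • w ∈ K ∩ Metric.sphere (0 : V) 1 := by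
      refine ⟨hsmul _ (by positivity) w hw, ?_⟩
      simp [norm_smul, abs_of_nonneg, inv_mul_cancel₀ (norm_ne_zero_iff.2 hw0)]
    have h1 : ⟪w₀, y₀⟫ ≤ ⟪‖w‖⁻¹ • w, y₀⟫ := hmin hu
    rw [real_inner_smul_left] at h1
    have hnorm : 0 < ‖w‖ := norm_pos_iff.2 hw0
    calc ⟪w₀, y₀⟫ * ‖w‖ ≤ (‖w‖⁻¹ * ⟪w, y₀⟫) * ‖w‖ := by nlinarith
      _ = ⟪w, y₀⟫ := by field_simp

private lemma zaux_base {K : Set V} (hcl : IsClosed K)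
    (hadd : ∀ x ∈ K, ∀ y ∈ K, x + y ∈ K)
    (hsmul : ∀ (c : ℝ), 0 ≤ c → ∀ x ∈ K, c • x ∈ K)
    (h0 : (0 : V) ∈ K) (L : V →ₗ[ℝ] V) (Lc : V →L[ℝ] V) (hLc : ∀ v : V, Lc v = L v)
    (hZ : ∀ x ∈ K, ∀ y : V, (∀ z ∈ K, 0 ≤ ⟪y, z⟫) → ⟪x, y⟫ = 0 → ⟪L x, y⟫ ≤ 0)
    {t : ℝ} (ht : ‖Lc‖ < t) :
    ∃ S : V →L[ℝ] V, S * (Lc + t • 1) = 1 ∧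
      (Lc + t • 1) * S = 1 ∧ ∀ z ∈ K, S z ∈ K := by
  have ht0 : 0 < t := lt_of_le_of_lt (norm_nonneg _) ht
  have hB : ‖-(t⁻¹ • Lc)‖ < 1 := by
    have hx : ‖-(t⁻¹ • Lc)‖ = |t⁻¹| * ‖Lc‖ := by
      rw [norm_neg]
      exact norm_smul t⁻¹ Lc
    rw [hx, abs_of_pos (inv_pos.2 ht0), inv_mul_lt_iff₀ ht0, mul_one]
    exact ht
  set u : (V →L[ℝ] V)ˣ := Units.oneSub (-(t⁻¹ • Lc)) hB with hudef
  have huval : (u : V →L[ℝ] V) = 1 + t⁻¹ • Lc := by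
    rw [hudef, Units.val_oneSub, sub_neg_eq_add]
  have hval : t • (u : V →L[ℝ] V) = Lc + t • 1 := by
    rw [huval, smul_add, smul_smul, mul_inv_cancel₀ ht0.ne', one_smul, add_comm]
  have hone : (1 : V →L[ℝ] V) = (1 : ℝ) • (1 : V →L[ℝ] V) := (one_smul ℝ _).symm
  refine ⟨t⁻¹ • ((u⁻¹ : (V →L[ℝ] V)ˣ) : V →L[ℝ] V), ?_, ?_, ?_⟩
  · rw [← hval, zaux_smul_mul, inv_mul_cancel₀ ht0.ne', Units.inv_mul, one_smul]
  · rw [← hval, zaux_smul_mul, mul_inv_cancel₀ ht0.ne', Units.mul_inv, one_smul]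
  · intro z hz
    have hAS : (Lc + t • 1) * (t⁻¹ • ((u⁻¹ : (V →L[ℝ] V)ˣ) : V →L[ℝ] V)) = 1 := by
      rw [← hval, zaux_smul_mul, mul_inv_cancel₀ ht0.ne', Units.mul_inv, one_smul]
    set x : V := (t⁻¹ • ((u⁻¹ : (V →L[ℝ] V)ˣ) : V →L[ℝ] V)) z with hxdef
    have hAx : L x + t • x = z := by
      have h := congrArg (fun (M : V →L[ℝ] V) => M z) hAS
      simp only [ContinuousLinearMap.mul_apply, ContinuousLinearMap.one_apply] at h
      calc L x + t • x = (Lc + t • 1) x := by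
            simp [ContinuousLinearMap.add_apply, hLc]
        _ = z := h
    obtain ⟨p, w, hp, hw, hpw, hxde⟩ := zaux_moreau hcl hadd hsmul h0 x
    have hw0 : w = 0 := by
      by_contra hw0
      have h1 : 0 ≤ ⟪w, z⟫ := hw z hz
      have hz' : ⟪w, z⟫ = ⟪w, L p⟫ - ⟪w, L w⟫ + t * ⟪w, p⟫ - t * ⟪w, w⟫ := by
        rw [← hAx, hxde, map_sub, smul_sub,
          show L p - L w + (t • p - t • w) = (L p - L w + t • p) - t • w by abel,
          inner_sub_right, inner_add_right, inner_sub_right,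
          real_inner_smul_right, real_inner_smul_right]
      have hZp' : ⟪w, L p⟫ ≤ 0 := by
        rw [real_inner_comm]; exact hZ p hp w hw hpw
      have hwp : ⟪w, p⟫ = 0 := by rwa [real_inner_comm] at hpw
      have hLu : ‖L w‖ ≤ ‖Lc‖ * ‖w‖ := by rw [← hLc]; exact Lc.le_opNorm w
      have habs : -(‖Lc‖ * ‖w‖ * ‖w‖) ≤ ⟪w, L w⟫ := by
        have h2 := abs_real_inner_le_norm w (L w)
        have h3 : ‖w‖ * ‖L w‖ ≤ ‖w‖ * (‖Lc‖ * ‖w‖) :=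
          mul_le_mul_of_nonneg_left hLu (norm_nonneg w)
        have h4 := neg_abs_le ⟪w, L w⟫
        nlinarith
      have hwn : 0 < ‖w‖ := norm_pos_iff.2 hw0
      have hww : ⟪w, w⟫ = ‖w‖ * ‖w‖ := real_inner_self_eq_norm_mul_norm w
      nlinarith [mul_pos (sub_pos.2 ht) (mul_pos hwn hwn)]
    rw [hw0, sub_zero] at hxde
    rw [hxde]
    exact hp

private lemma zaux_step {K : Set V} (hcl : IsClosed K)
    (hadd : ∀ x ∈ K, ∀ y ∈ K, x + y ∈ K)
    (hsmul : ∀ (c : ℝ), 0 ≤ c → ∀ x ∈ K, c • x ∈ K)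
    (Lc : V →L[ℝ] V) {t h : ℝ} (hh : 0 ≤ h) {S : V →L[ℝ] V}
    (hS1 : S * (Lc + t • 1) = 1)
    (hS2 : (Lc + t • 1) * S = 1)
    (hSK : ∀ z ∈ K, S z ∈ K)
    (hnorm : h * ‖S‖ < 1) :
    ∃ S' : V →L[ℝ] V, S' * (Lc + (t - h) • 1) = 1 ∧
      (Lc + (t - h) • 1) * S' = 1 ∧ ∀ z ∈ K, S' z ∈ K := by
  set A : V →L[ℝ] V := Lc + t • 1 with hAdef
  set B : V →L[ℝ] V := h • S with hBdef
  have hB : ‖B‖ < 1 := by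
    have hn : ‖B‖ = h * ‖S‖ := by
      rw [hBdef]
      have hx := norm_smul h S
      rw [Real.norm_eq_abs, abs_of_nonneg hh] at hx
      exact hx
    rw [hn]
    exact hnorm
  set u : (V →L[ℝ] V)ˣ := Units.oneSub B hB with hudef
  have huval : (u : V →L[ℝ] V) = 1 - B := by rw [hudef, Units.val_oneSub]
  set T : V →L[ℝ] V := ((u⁻¹ : (V →L[ℝ] V)ˣ) : V →L[ℝ] V) with hTdef
  have hTu : T * (1 - B) = 1 := by rw [← huval, hTdef]; exact u.inv_mul
  have huT : (1 - B) * T = 1 := by rw [← huval, hTdef]; exact u.mul_inv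
  -- commutations
  have hSB : S * (1 - B) = (1 - B) * S := by
    ext v
    simp only [ContinuousLinearMap.mul_apply, ContinuousLinearMap.sub_apply,
      ContinuousLinearMap.one_apply, ContinuousLinearMap.smul_apply, hBdef, map_smul,
      map_sub]
  have hAB : A * (1 - B) = (1 - B) * A := by
    have e1 : ∀ v, A (S v) = v := fun v =>
      congrArg (fun (M : V →L[ℝ] V) => M v) hS2
    have e2 : ∀ v, S (A v) = v := fun v =>
      congrArg (fun (M : V →L[ℝ] V) => M v) hS1
    ext v
    simp only [ContinuousLinearMap.mul_apply, ContinuousLinearMap.sub_apply,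
      ContinuousLinearMap.one_apply, ContinuousLinearMap.smul_apply, hBdef,
      map_sub, map_smul, e1, e2]
  have hAT : A * T = T * A := by
    have hc : Commute A ((u : (V →L[ℝ] V)ˣ) : V →L[ℝ] V) := by
      rw [huval]; exact hAB
    rw [hTdef]
    exact hc.units_inv_right
  -- identification of the new operator
  have hA' : Lc + (t - h) • 1 = (1 - B) * A := by
    have hBA : B * A = h • (1 : V →L[ℝ] V) := by
      calc B * A = (h • S) * ((1 : ℝ) • A) := by rw [hBdef, one_smul]
        _ = (h * 1) • (S * A) := zaux_smul_mul h 1 S A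
        _ = h • (1 : V →L[ℝ] V) := by rw [mul_one, hS1]
    rw [sub_mul, one_mul, hBA, hAdef, sub_smul]
    abel
  refine ⟨T * S, ?_, ?_, ?_⟩
  · rw [hA']
    calc T * S * ((1 - B) * A) = T * (S * (1 - B)) * A := by noncomm_ring
      _ = T * ((1 - B) * S) * A := by rw [hSB]
      _ = (T * (1 - B)) * (S * A) := by noncomm_ring
      _ = 1 := by rw [hTu, hS1, one_mul]
  · rw [hA']
    calc (1 - B) * A * (T * S) = (1 - B) * (A * T) * S := by noncomm_ring
      _ = (1 - B) * (T * A) * S := by rw [hAT]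
      _ = ((1 - B) * T) * (A * S) := by noncomm_ring
      _ = 1 := by rw [huT, hS2, one_mul]
  · intro z hz
    have hz' : S z ∈ K := hSK z hz
    have hhs : HasSum (fun n => (B ^ n) (S z)) (T (S z)) := by
      have := (summable_geometric_of_norm_lt_one hB).hasSum.mapL
        (ContinuousLinearMap.apply ℝ V (S z))
      simpa [hTdef, hudef, Units.oneSub, Units.inv_mk] using this
    have hmem : ∀ n, (B ^ n) (S z) ∈ K := by
      intro n
      induction n with
      | zero => simpa using hz'
      | succ n ih =>
        rw [pow_succ']
        have : (B * B ^ n) (S z) = h • (S ((B ^ n) (S z))) := by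
          simp [hBdef, ContinuousLinearMap.mul_apply]
        rw [this]
        exact hsmul h hh _ (hSK _ ih)
    have hpartial : ∀ n, ∑ i ∈ Finset.range n, (B ^ i) (S z) ∈ K := by
      intro n
      induction n with
      | zero =>
        simpa using hsmul 0 le_rfl _ hz'
      | succ n ih =>
        rw [Finset.sum_range_succ]
        exact hadd _ ih _ (hmem n)
    have : T (S z) ∈ K :=
      hcl.mem_of_tendsto hhs.tendsto_sum_nat
        (Filter.Eventually.of_forall hpartial)
    exact this

private lemma zaux_bound {K : Set V}
    (L : V →ₗ[ℝ] V) (Lc : V →L[ℝ] V) (hLc : ∀ v : V, Lc v = L v)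
    (hLK : ∀ x ∈ K, L x ∈ K)
    {y₀ : V} {c : ℝ} (hc : 0 < c) (hy₀ : ∀ w ∈ K, c * ‖w‖ ≤ ⟪w, y₀⟫)
    {e : V} {δ : ℝ} (hδ : 0 < δ) (hball : ∀ v : V, ‖v‖ ≤ δ → e + v ∈ K) (heK : e ∈ K)
    {t : ℝ} (ht : 0 < t) {S : V →L[ℝ] V}
    (hS2 : (Lc + t • 1) * S = 1)
    (hSK : ∀ z ∈ K, S z ∈ K) :
    ‖S‖ ≤ ((2 * ⟪e, y₀⟫ + δ * ‖y₀‖) / (δ * c)) / t := by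
  have hApply : ∀ v : V, L (S v) + t • S v = v := by
    intro v
    have h := congrArg (fun (M : V →L[ℝ] V) => M v) hS2
    simp only [ContinuousLinearMap.mul_apply, ContinuousLinearMap.one_apply] at h
    calc L (S v) + t • S v = (Lc + t • 1) (S v) := by
          simp [ContinuousLinearMap.add_apply, hLc]
      _ = v := h
  -- pointwise bound on K
  have key : ∀ z ∈ K, ‖S z‖ ≤ ⟪z, y₀⟫ / (c * t) := by
    intro z hz
    have ha : S z ∈ K := hSK z hz
    have hLa : L (S z) ∈ K := hLK _ ha
    have h1 : c * ‖L (S z)‖ ≤ ⟪L (S z), y₀⟫ := hy₀ _ hLa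
    have h2 : c * ‖S z‖ ≤ ⟪S z, y₀⟫ := hy₀ _ ha
    have h3 : ⟪z, y₀⟫ = ⟪L (S z), y₀⟫ + t * ⟪S z, y₀⟫ := by
      conv_lhs => rw [← hApply z]
      rw [inner_add_left, real_inner_smul_left]
    have h4 : 0 ≤ ‖L (S z)‖ := norm_nonneg _
    rw [le_div_iff₀ (mul_pos hc ht)]
    nlinarith
  have hE : 0 ≤ ⟪e, y₀⟫ := le_trans (by positivity) (hy₀ e heK)
  have hM : 0 ≤ ((2 * ⟪e, y₀⟫ + δ * ‖y₀‖) / (δ * c)) / t := by positivity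
  refine ContinuousLinearMap.opNorm_le_bound S hM ?_
  intro v
  rcases eq_or_ne v 0 with rfl | hv0
  · simp
  · have hn : 0 < ‖v‖ := norm_pos_iff.2 hv0
    set k₁ : V := e + (δ / ‖v‖) • v with hk₁def
    have hk₁K : k₁ ∈ K := by
      refine hball _ ?_
      have := norm_smul (δ / ‖v‖) v
      rw [Real.norm_eq_abs, abs_of_pos (by positivity)] at this
      rw [this, div_mul_cancel₀]
      exact hn.ne'
    have hvexp : S v = (‖v‖ / δ) • (S k₁ - S e) := by
      have : (‖v‖ / δ) • (k₁ - e) = v := by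
        rw [hk₁def, add_sub_cancel_left, smul_smul]
        rw [div_mul_div_comm, mul_comm, div_self (by positivity), one_smul]
      conv_lhs => rw [← this]
      rw [map_smul, map_sub]
    have hSk₁ : ‖S k₁‖ ≤ ⟪k₁, y₀⟫ / (c * t) := key k₁ hk₁K
    have hSe : ‖S e‖ ≤ ⟪e, y₀⟫ / (c * t) := key e heK
    have hk₁y : ⟪k₁, y₀⟫ ≤ ⟪e, y₀⟫ + δ * ‖y₀‖ := by
      rw [hk₁def, inner_add_left, real_inner_smul_left]
      have hCS : ⟪v, y₀⟫ ≤ ‖v‖ * ‖y₀‖ := real_inner_le_norm v y₀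
      have : (δ / ‖v‖) * ⟪v, y₀⟫ ≤ (δ / ‖v‖) * (‖v‖ * ‖y₀‖) :=
        mul_le_mul_of_nonneg_left hCS (by positivity)
      have he2 : (δ / ‖v‖) * (‖v‖ * ‖y₀‖) = δ * ‖y₀‖ := by
        field_simp
      linarith
    have hnormsv : ‖S v‖ = (‖v‖ / δ) * ‖S k₁ - S e‖ := by
      rw [hvexp]
      have := norm_smul (‖v‖ / δ) (S k₁ - S e)
      rw [Real.norm_eq_abs, abs_of_pos (by positivity)] at this
      exact this
    have htri : ‖S k₁ - S e‖ ≤ ‖S k₁‖ + ‖S e‖ := norm_sub_le _ _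
    have hchain : ‖S v‖ ≤ (‖v‖ / δ) * ((2 * ⟪e, y₀⟫ + δ * ‖y₀‖) / (c * t)) := by
      rw [hnormsv]
      have h5 : ‖S k₁‖ + ‖S e‖ ≤ (2 * ⟪e, y₀⟫ + δ * ‖y₀‖) / (c * t) := by
        have : ⟪k₁, y₀⟫ / (c * t) + ⟪e, y₀⟫ / (c * t) ≤
            (2 * ⟪e, y₀⟫ + δ * ‖y₀‖) / (c * t) := by
          rw [← add_div, div_le_div_iff_of_pos_right (mul_pos hc ht)]
          linarith
        linarith
      have h6 : 0 ≤ ‖v‖ / δ := by positivity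
      nlinarith [norm_nonneg (S k₁ - S e)]
    calc ‖S v‖ ≤ (‖v‖ / δ) * ((2 * ⟪e, y₀⟫ + δ * ‖y₀‖) / (c * t)) := hchain
      _ = ((2 * ⟪e, y₀⟫ + δ * ‖y₀‖) / (δ * c)) / t * ‖v‖ := by
          field_simp

end ZauxLemmas

theorem stmt_8 {V : Type*} [NormedAddCommGroup V] [InnerProductSpace ℝ V]
    [FiniteDimensional ℝ V] (K : Set V) (hK : IsProperCone K) (L : V →ₗ[ℝ] V) :
    (HasZProperty K L ∧ ∀ x ∈ K, L x ∈ K) ↔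
      (∀ t : ℝ, 0 < t →
        Function.Bijective (L + t • (LinearMap.id : V →ₗ[ℝ] V)) ∧
        (L + t • (LinearMap.id : V →ₗ[ℝ] V)) '' K = K) := by
  obtain ⟨hcl, hadd, hsmul, hpt, hint⟩ := hK
  have h0K : (0 : V) ∈ K := by
    obtain ⟨e, he⟩ := hint
    simpa using hsmul 0 le_rfl e (interior_subset he)
  have hfapp : ∀ (t : ℝ) (x : V), (L + t • (LinearMap.id : V →ₗ[ℝ] V)) x = L x + t • x := by
    intro t x
    simp
  -- trivial case
  rcases subsingleton_or_nontrivial V with hV | hV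
  · constructor
    · intro _ t _
      refine ⟨⟨fun a b _ => Subsingleton.elim a b, fun z => ⟨z, Subsingleton.elim _ _⟩⟩, ?_⟩
      apply Set.Subset.antisymm
      · rintro _ ⟨x, hx, rfl⟩
        rwa [Subsingleton.elim ((L + t • (LinearMap.id : V →ₗ[ℝ] V)) x) x]
      · intro z hz
        exact ⟨z, hz, Subsingleton.elim _ _⟩
    · intro _
      constructor
      · intro x hx y hy hxy
        rw [Subsingleton.elim (L x) 0, inner_zero_left]
      · intro x hx
        rwa [Subsingleton.elim (L x) x]
  -- nontrivial case: setup
  obtain ⟨e, he⟩ := hint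
  have heK : e ∈ K := interior_subset he
  obtain ⟨ε, hε, hball₀⟩ := Metric.mem_nhds_iff.1 (mem_interior_iff_mem_nhds.1 he)
  set δ : ℝ := ε / 2 with hδdef
  have hδ : 0 < δ := by positivity
  have hball : ∀ v : V, ‖v‖ ≤ δ → e + v ∈ K := by
    intro v hv
    apply hball₀
    rw [Metric.mem_ball, dist_eq_norm, add_sub_cancel_left]
    calc ‖v‖ ≤ δ := hv
      _ < ε := by rw [hδdef]; linarith
  have hne : ∃ x ∈ K, x ≠ 0 := by
    rcases eq_or_ne e 0 with rfl | he0
    · obtain ⟨v, hv⟩ := exists_ne (0 : V)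
      have hn : 0 < ‖v‖ := norm_pos_iff.2 hv
      refine ⟨(δ / ‖v‖) • v, ?_, ?_⟩
      · have := hball ((δ / ‖v‖) • v) ?_
        · rwa [zero_add] at this
        · have hns := norm_smul (δ / ‖v‖) v
          rw [Real.norm_eq_abs, abs_of_pos (by positivity)] at hns
          rw [hns, div_mul_cancel₀ _ hn.ne']
      · exact smul_ne_zero (by positivity) hv
    · exact ⟨e, heK, he0⟩
  obtain ⟨y₀, c, hc, hy₀⟩ := zaux_strict_functional hcl hadd hsmul hpt hne
  have hE : 0 ≤ ⟪e, y₀⟫ := le_trans (by positivity) (hy₀ e heK)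
  -- notation
  set Lc : V →L[ℝ] V := LinearMap.toContinuousLinearMap L with hLcdef
  have hLc : ∀ v : V, Lc v = L v := fun v => by
    rw [hLcdef, LinearMap.coe_toContinuousLinearMap']
  clear_value Lc
  have hAapp : ∀ (t : ℝ) (x : V), (Lc + t • 1) x = L x + t • x := by
    intro t x
    simp [ContinuousLinearMap.add_apply, hLc]
  constructor
  · -- (1) → (2)
    rintro ⟨hZ, hLK⟩
    -- constants for the continuation argument
    set C₀ : ℝ := (2 * ⟪e, y₀⟫ + δ * ‖y₀‖) / (δ * c) with hC₀def
    have hC₀0 : 0 ≤ C₀ := by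
      apply div_nonneg _ (by positivity)
      have : 0 ≤ δ * ‖y₀‖ := by positivity
      linarith
    set C₁ : ℝ := max C₀ 1 with hC₁def
    have hC₁1 : (1 : ℝ) ≤ C₁ := le_max_right _ _
    have hC₁0 : (0 : ℝ) < C₁ := lt_of_lt_of_le one_pos hC₁1
    have hC₀C₁ : C₀ ≤ C₁ := le_max_left _ _
    set ρ : ℝ := 1 - 1 / (2 * C₁) with hρdef
    have hinv : 0 < 1 / (2 * C₁) := by positivity
    have hinvle : 1 / (2 * C₁) ≤ 1 / 2 := by
      apply one_div_le_one_div_of_le (by norm_num)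
      linarith
    have hρpos : 0 < ρ := by rw [hρdef]; linarith
    have hρlt : ρ < 1 := by rw [hρdef]; linarith
    set T₀ : ℝ := ‖Lc‖ + 1 with hT₀def
    have hT₀ : 0 < T₀ := by rw [hT₀def]; positivity
    have main : ∀ n : ℕ, ∀ t : ℝ, T₀ * ρ ^ n ≤ t →
        ∃ S : V →L[ℝ] V, S * (Lc + t • 1) = 1 ∧ (Lc + t • 1) * S = 1 ∧
          ∀ z ∈ K, S z ∈ K := by
      intro n
      induction n with
      | zero =>
        intro t hT
        rw [pow_zero, mul_one, hT₀def] at hT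
        exact zaux_base hcl hadd hsmul h0K L Lc hLc hZ (by linarith)
      | succ n ih =>
        intro t hT
        have ht0 : 0 < t := lt_of_lt_of_le (by positivity) hT
        by_cases hcase : T₀ * ρ ^ n ≤ t
        · exact ih t hcase
        · push_neg at hcase
          set s : ℝ := t / ρ with hsdef
          have hs0 : 0 < s := by positivity
          have hts : ρ * s = t := by
            rw [hsdef, mul_div_cancel₀]
            exact hρpos.ne'
          have hsIH : T₀ * ρ ^ n ≤ s := by
            have h1 : T₀ * ρ ^ (n + 1) = (T₀ * ρ ^ n) * ρ := by ring
            have h2 : (T₀ * ρ ^ n) * ρ ≤ s * ρ := by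
              rw [← h1]
              calc T₀ * ρ ^ (n + 1) ≤ t := hT
                _ = s * ρ := by rw [← hts]; ring
            exact le_of_mul_le_mul_right h2 hρpos
          obtain ⟨S, hS1, hS2, hSK⟩ := ih s hsIH
          have hbound : ‖S‖ ≤ C₀ / s := by
            have := zaux_bound L Lc hLc hLK hc hy₀ hδ hball heK hs0 hS2 hSK
            rw [hC₀def]
            exact this
          set h : ℝ := s - t with hhdef
          have hh : 0 ≤ h := by
            rw [hhdef, ← hts]
            nlinarith
          have hnorm : h * ‖S‖ < 1 := by
            have h1 : h * ‖S‖ ≤ h * (C₀ / s) :=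
              mul_le_mul_of_nonneg_left hbound hh
            have h2 : h * (C₀ / s) = (1 / (2 * C₁)) * C₀ := by
              rw [hhdef, ← hts, hρdef]
              field_simp
              ring
            have h3 : (1 / (2 * C₁)) * C₀ < 1 := by
              rw [div_mul_eq_mul_div, one_mul, div_lt_one (by positivity)]
              linarith
            calc h * ‖S‖ ≤ h * (C₀ / s) := h1
              _ = (1 / (2 * C₁)) * C₀ := h2
              _ < 1 := h3
          obtain ⟨S', hS'1, hS'2, hS'K⟩ := zaux_step hcl hadd hsmul Lc hh hS1 hS2 hSK hnorm
          have hst : s - h = t := by rw [hhdef]; ring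
          rw [hst] at hS'1 hS'2
          exact ⟨S', hS'1, hS'2, hS'K⟩
    have getP : ∀ t : ℝ, 0 < t →
        ∃ S : V →L[ℝ] V, S * (Lc + t • 1) = 1 ∧ (Lc + t • 1) * S = 1 ∧
          ∀ z ∈ K, S z ∈ K := by
      intro t ht
      obtain ⟨n, hn⟩ := exists_pow_lt_of_lt_one (div_pos ht hT₀) hρlt
      refine main n t ?_
      have := (mul_lt_mul_iff_right₀ hT₀).2 hn
      rw [mul_div_cancel₀ _ hT₀.ne'] at this
      exact this.le
    intro t ht
    obtain ⟨S, hS1, hS2, hSK⟩ := getP t ht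
    have hleft : ∀ x : V, S ((L + t • (LinearMap.id : V →ₗ[ℝ] V)) x) = x := by
      intro x
      have h := congrArg (fun (M : V →L[ℝ] V) => M x) hS1
      simp only [ContinuousLinearMap.mul_apply, ContinuousLinearMap.one_apply] at h
      rw [hfapp, ← hAapp]
      exact h
    have hright : ∀ x : V, (L + t • (LinearMap.id : V →ₗ[ℝ] V)) (S x) = x := by
      intro x
      have h := congrArg (fun (M : V →L[ℝ] V) => M x) hS2
      simp only [ContinuousLinearMap.mul_apply, ContinuousLinearMap.one_apply] at h
      rw [hfapp, ← hAapp]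
      exact h
    constructor
    · exact ⟨Function.LeftInverse.injective hleft,
        Function.RightInverse.surjective hright⟩
    · apply Set.Subset.antisymm
      · rintro _ ⟨x, hx, rfl⟩
        rw [hfapp]
        exact hadd _ (hLK x hx) _ (hsmul t ht.le x hx)
      · intro z hz
        exact ⟨S z, hSK z hz, hright z⟩
  · -- (2) → (1)
    intro hR
    have hLK : ∀ x ∈ K, L x ∈ K := by
      intro x hx
      have hseq : ∀ n : ℕ, L x + (1 / ((n : ℝ) + 1)) • x ∈ K := by
        intro n
        have hpos : (0 : ℝ) < 1 / ((n : ℝ) + 1) := by positivity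
        have h2 := (hR _ hpos).2
        have hmem : (L + (1 / ((n : ℝ) + 1)) • (LinearMap.id : V →ₗ[ℝ] V)) x ∈
            (L + (1 / ((n : ℝ) + 1)) • (LinearMap.id : V →ₗ[ℝ] V)) '' K :=
          Set.mem_image_of_mem _ hx
        rw [h2] at hmem
        rwa [hfapp] at hmem
      have htend : Filter.Tendsto (fun n : ℕ => L x + (1 / ((n : ℝ) + 1)) • x)
          Filter.atTop (nhds (L x)) := by
        have h0 : Filter.Tendsto (fun n : ℕ => 1 / ((n : ℝ) + 1))
            Filter.atTop (nhds 0) := tendsto_one_div_add_atTop_nhds_zero_nat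
        have h1 := h0.smul_const x
        rw [zero_smul] at h1
        have h2 := (tendsto_const_nhds (x := L x) (f := Filter.atTop)).add h1
        rwa [add_zero] at h2
      exact hcl.mem_of_tendsto htend (Filter.Eventually.of_forall hseq)
    refine ⟨?_, hLK⟩
    intro x hx y hy hxy
    have hLxK : L x ∈ K := hLK x hx
    have hLxy₀ : 0 ≤ ⟪L x, y₀⟫ := le_trans (by positivity) (hy₀ _ hLxK)
    have hmain : ∀ t : ℝ, 0 < t →
        c * (⟪L x, y⟫ * t) ≤ ‖Lc‖ * ‖y‖ * ⟪L x, y₀⟫ := by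
      intro t ht
      obtain ⟨hbij, himg⟩ := hR t ht
      obtain ⟨w, hwK, hw⟩ : ∃ w ∈ K, (L + t • (LinearMap.id : V →ₗ[ℝ] V)) w = L x := by
        have hmem : L x ∈ (L + t • (LinearMap.id : V →ₗ[ℝ] V)) '' K := by
          rw [himg]; exact hLxK
        obtain ⟨w, hwK, hw⟩ := hmem
        exact ⟨w, hwK, hw⟩
      obtain ⟨u, huK, hu⟩ : ∃ u ∈ K, (L + t • (LinearMap.id : V →ₗ[ℝ] V)) u = x := by
        have hmem : x ∈ (L + t • (LinearMap.id : V →ₗ[ℝ] V)) '' K := by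
          rw [himg]; exact hx
        obtain ⟨u, huK, hu⟩ := hmem
        exact ⟨u, huK, hu⟩
      -- w = x - t • u
      have hwu : w = x - t • u := by
        apply hbij.1
        rw [hw, map_sub, map_smul, hu, hfapp]
        abel
      -- ⟪w, y⟫ ≤ 0
      have hwy : ⟪w, y⟫ ≤ 0 := by
        rw [hwu, inner_sub_left, real_inner_smul_left, hxy]
        have h0' : 0 ≤ ⟪u, y⟫ := by rw [real_inner_comm]; exact hy u huK
        linarith only [mul_nonneg ht.le h0']
      -- L x = L w + t • w
      have hLxw : L x = L w + t • w := by rw [← hw, hfapp]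
      -- bound on ‖w‖
      have hLwK : L w ∈ K := hLK w hwK
      have h1 : 0 ≤ ⟪L w, y₀⟫ := le_trans (by positivity) (hy₀ _ hLwK)
      have h2 : c * ‖w‖ ≤ ⟪w, y₀⟫ := hy₀ w hwK
      have h3 : ⟪L x, y₀⟫ = ⟪L w, y₀⟫ + t * ⟪w, y₀⟫ := by
        rw [hLxw, inner_add_left, real_inner_smul_left]
      have hwbound : c * (t * ‖w‖) ≤ ⟪L x, y₀⟫ := by
        linarith only [h3, h1, mul_le_mul_of_nonneg_left h2 ht.le]
      -- conclude
      have h4 : ⟪L x, y⟫ = ⟪L w, y⟫ + t * ⟪w, y⟫ := by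
        rw [hLxw, inner_add_left, real_inner_smul_left]
      have e1 : t * ⟪w, y⟫ ≤ 0 := mul_nonpos_iff.mpr (Or.inl ⟨ht.le, hwy⟩)
      have h5 : ⟪L w, y⟫ ≤ ‖L w‖ * ‖y‖ := real_inner_le_norm _ _
      have h6 : ‖L w‖ ≤ ‖Lc‖ * ‖w‖ := by rw [← hLc]; exact Lc.le_opNorm w
      have h7 : (0:ℝ) ≤ ‖y‖ := norm_nonneg y
      have h8 : (0:ℝ) ≤ ‖Lc‖ := norm_nonneg Lc
      have h9 : (0:ℝ) ≤ ‖w‖ := norm_nonneg w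
      have hA : ⟪L x, y⟫ ≤ ‖Lc‖ * ‖w‖ * ‖y‖ := by
        linarith only [h4, e1, h5, mul_le_mul_of_nonneg_right h6 h7]
      have hB : c * (⟪L x, y⟫ * t) ≤ c * t * (‖Lc‖ * ‖w‖ * ‖y‖) := by
        linarith only [mul_le_mul_of_nonneg_left hA (mul_pos hc ht).le]
      have hC : c * t * (‖Lc‖ * ‖w‖ * ‖y‖) ≤ ‖Lc‖ * ‖y‖ * ⟪L x, y₀⟫ := by
        linarith only [mul_le_mul_of_nonneg_left hwbound (mul_nonneg h8 h7)]
      linarith only [hB, hC]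
    by_contra hpos
    push_neg at hpos
    have hD0 : 0 ≤ ‖Lc‖ * ‖y‖ * ⟪L x, y₀⟫ :=
      mul_nonneg (mul_nonneg (norm_nonneg _) (norm_nonneg _)) hLxy₀
    have hcg : 0 < c * ⟪L x, y⟫ := mul_pos hc hpos
    have ht : 0 < (‖Lc‖ * ‖y‖ * ⟪L x, y₀⟫ + 1) / (c * ⟪L x, y⟫) :=
      div_pos (by linarith) hcg
    have hb := hmain _ ht
    have heq : c * (⟪L x, y⟫ * ((‖Lc‖ * ‖y‖ * ⟪L x, y₀⟫ + 1) / (c * ⟪L x, y⟫))) =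
        ‖Lc‖ * ‖y‖ * ⟪L x, y₀⟫ + 1 := by
      field_simp
    rw [heq] at hb
    linarith
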